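/- Let (Ω, ℱ, P) be a probability space, let Q, R : Ω → ℝ be independent, identically distributed measurable functions with 0 ≤ Q ≤ 1 almost surely, and set q = P(Q = 0). Let α ∈ ℝ and assume that for every integer k ≥ 1, 2·E[s_k(Q)] ≥ α·E[s_k(Q·R)]. Then 2q ≥ α·(2q − q²); in particular, if q > 0 then α ≤ 2/(2 − q). -/

import Mathlib

open MeasureTheory ProbabilityTheory Finset Filter

lemma avg_tendsto_aux {Ω : Type*} [MeasurableSpace Ω] (P : Measure Ω) [IsProbabilityMeasure P]
    (Q : Ω → ℝ) (hQ : Measurable Q) (h0 : ∀ᵐ ω ∂P, 0 ≤ Q ω) (h1 : ∀ᵐ ω ∂P, Q ω ≤ 1) :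
    Tendsto (fun k : ℕ => (k : ℝ)⁻¹ * ∫ ω, (∑ j ∈ Finset.range k, (1 - Q ω) ^ j) ∂P) atTop
      (nhds ((P {ω | Q ω = 0}).toReal)) := by
  have hA : MeasurableSet {ω | Q ω = 0} := hQ (measurableSet_singleton 0)
  have key : Tendsto (fun k : ℕ => ∫ ω, (k : ℝ)⁻¹ * ∑ j ∈ Finset.range k, (1 - Q ω) ^ j ∂P)
      atTop (nhds (∫ ω, Set.indicator {ω | Q ω = 0} (fun _ => (1:ℝ)) ω ∂P)) := by
    apply tendsto_integral_of_dominated_convergence (fun _ => (1:ℝ))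
    · intro n
      exact (measurable_const.mul (Finset.measurable_sum _ fun j _ =>
        ((measurable_const.sub hQ).pow_const j))).aestronglyMeasurable
    · exact integrable_const 1
    · intro n
      filter_upwards [h0, h1] with ω hω0 hω1
      have hterm : ∀ j ∈ Finset.range n, (0:ℝ) ≤ (1 - Q ω) ^ j ∧ (1 - Q ω) ^ j ≤ 1 := by
        intro j _
        constructor
        · exact pow_nonneg (by linarith) j
        · exact pow_le_one₀ (by linarith) (by linarith)
      have hs0 : (0:ℝ) ≤ ∑ j ∈ Finset.range n, (1 - Q ω) ^ j :=
        Finset.sum_nonneg fun j hj => (hterm j hj).1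
      have hs1 : ∑ j ∈ Finset.range n, (1 - Q ω) ^ j ≤ n := by
        calc ∑ j ∈ Finset.range n, (1 - Q ω) ^ j ≤ ∑ j ∈ Finset.range n, (1:ℝ) :=
              Finset.sum_le_sum fun j hj => (hterm j hj).2
          _ = n := by simp
      rw [Real.norm_eq_abs, abs_of_nonneg (by positivity)]
      rcases Nat.eq_zero_or_pos n with h | h
      · simp [h]
      · have hn : (0:ℝ) < n := by exact_mod_cast h
        calc (n:ℝ)⁻¹ * ∑ j ∈ Finset.range n, (1 - Q ω) ^ j ≤ (n:ℝ)⁻¹ * n := by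
              apply mul_le_mul_of_nonneg_left hs1 (by positivity)
          _ = 1 := by field_simp
    · filter_upwards [h0, h1] with ω hω0 hω1
      by_cases hz : Q ω = 0
      · have : Set.indicator {ω | Q ω = 0} (fun _ => (1:ℝ)) ω = 1 := by
          simp [Set.indicator_of_mem, hz]
        rw [this]
        apply Tendsto.congr' (f₁ := fun _ => (1:ℝ))
        · filter_upwards [eventually_ge_atTop 1] with k hk
          have hk' : (0:ℝ) < k := by exact_mod_cast hk
          simp [hz]
          field_simp
        · exact tendsto_const_nhds
      · have : Set.indicator {ω | Q ω = 0} (fun _ => (1:ℝ)) ω = 0 := by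
          simp [Set.indicator_of_notMem, hz]
        rw [this]
        have hx : 0 < Q ω := lt_of_le_of_ne hω0 (Ne.symm hz)
        refine squeeze_zero (g := fun k : ℕ => (Q ω)⁻¹ * (k : ℝ)⁻¹) (fun k => mul_nonneg (by positivity)
            (Finset.sum_nonneg fun j _ => pow_nonneg (by linarith) j)) ?_ ?_
        · intro k
          have hpow : (0:ℝ) ≤ (1 - Q ω) ^ k := pow_nonneg (by linarith) k
          have hgm := geom_sum_mul (1 - Q ω) k
          have hsum : (∑ j ∈ Finset.range k, (1 - Q ω) ^ j) ≤ (Q ω)⁻¹ := by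
            rw [inv_eq_one_div, le_div_iff₀ hx]
            nlinarith
          have hk : (0:ℝ) ≤ (k:ℝ)⁻¹ := by positivity
          calc (k:ℝ)⁻¹ * ∑ j ∈ Finset.range k, (1 - Q ω) ^ j ≤ (k:ℝ)⁻¹ * (Q ω)⁻¹ :=
                mul_le_mul_of_nonneg_left hsum hk
            _ = (Q ω)⁻¹ * (k:ℝ)⁻¹ := mul_comm _ _
        · have : Tendsto (fun k : ℕ => (k:ℝ)⁻¹) atTop (nhds 0) :=
            tendsto_inv_atTop_zero.comp tendsto_natCast_atTop_atTop
          simpa using this.const_mul (Q ω)⁻¹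
  have hind : ∫ ω, Set.indicator {ω | Q ω = 0} (fun _ => (1:ℝ)) ω ∂P = (P {ω | Q ω = 0}).toReal := by
    simp [MeasureTheory.integral_indicator hA, Measure.real]
  rw [← hind]
  apply key.congr
  intro k
  rw [← MeasureTheory.integral_const_mul]

/-- For `Q, R` i.i.d. with `0 ≤ Q ≤ 1` a.s. and `q = P(Q = 0)`, if
`2 E[s_k(Q)] ≥ α E[s_k(QR)]` for every `k ≥ 1`, then `2q ≥ α(2q − q²)`; in particular if
`q > 0` then `α ≤ 2/(2 − q)`. -/
theorem alpha_bound_atom_case {Ω : Type*} [MeasurableSpace Ω]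
    (P : Measure Ω) [IsProbabilityMeasure P]
    (Q R : Ω → ℝ) (hQ : Measurable Q) (hR : Measurable R)
    (hindep : IndepFun Q R P) (hid : IdentDistrib Q R P P)
    (hQ0 : ∀ᵐ ω ∂P, 0 ≤ Q ω) (hQ1 : ∀ᵐ ω ∂P, Q ω ≤ 1)
    (q : ℝ) (hq : q = (P {ω | Q ω = 0}).toReal)
    (α : ℝ)
    (hineq : ∀ k : ℕ, 1 ≤ k →
      2 * (∫ ω, (∑ j ∈ Finset.range k, (1 - Q ω) ^ j) ∂P) ≥
        α * (∫ ω, (∑ j ∈ Finset.range k, (1 - Q ω * R ω) ^ j) ∂P)) :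
    2 * q ≥ α * (2 * q - q ^ 2) ∧ (0 < q → α ≤ 2 / (2 - q)) := by
  have hsets : MeasurableSet {x : ℝ | 0 ≤ x ∧ x ≤ 1} := by
    have : {x : ℝ | 0 ≤ x ∧ x ≤ 1} = Set.Icc 0 1 := rfl
    rw [this]; exact measurableSet_Icc
  have hR01 : ∀ᵐ ω ∂P, 0 ≤ R ω ∧ R ω ≤ 1 :=
    hid.ae_snd hsets (by filter_upwards [hQ0, hQ1] with ω h1 h2; exact ⟨h1, h2⟩)
  have hR0 : ∀ᵐ ω ∂P, 0 ≤ R ω := hR01.mono fun ω h => h.1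
  have hR1 : ∀ᵐ ω ∂P, R ω ≤ 1 := hR01.mono fun ω h => h.2
  have hQR : Measurable fun ω => Q ω * R ω := hQ.mul hR
  have hQR0 : ∀ᵐ ω ∂P, 0 ≤ Q ω * R ω := by
    filter_upwards [hQ0, hR0] with ω h1 h2; exact mul_nonneg h1 h2
  have hQR1 : ∀ᵐ ω ∂P, Q ω * R ω ≤ 1 := by
    filter_upwards [hQ0, hQ1, hR0, hR1] with ω h1 h2 h3 h4
    calc Q ω * R ω ≤ 1 * 1 := mul_le_mul h2 h4 h3 zero_le_one
      _ = 1 := one_mul 1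
  have tQ := avg_tendsto_aux P Q hQ hQ0 hQ1
  have tQR := avg_tendsto_aux P (fun ω => Q ω * R ω) hQR hQR0 hQR1
  have hS : MeasurableSet {ω | Q ω = 0} := hQ (measurableSet_singleton 0)
  have hT : MeasurableSet {ω | R ω = 0} := hR (measurableSet_singleton 0)
  have hRq : P {ω | R ω = 0} = P {ω | Q ω = 0} := by
    calc P {ω | R ω = 0} = Measure.map R P {0} :=
          (Measure.map_apply hR (measurableSet_singleton 0)).symm
      _ = Measure.map Q P {0} := by rw [hid.map_eq]
      _ = P {ω | Q ω = 0} := Measure.map_apply hQ (measurableSet_singleton 0)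
  have hInter : P ({ω | Q ω = 0} ∩ {ω | R ω = 0}) = P {ω | Q ω = 0} * P {ω | R ω = 0} :=
    hindep.measure_inter_preimage_eq_mul {0} {0} (measurableSet_singleton 0) (measurableSet_singleton 0)
  have hset : {ω | Q ω * R ω = 0} = {ω | Q ω = 0} ∪ {ω | R ω = 0} := by
    ext ω; simp [mul_eq_zero]
  have hBq : (P {ω | Q ω * R ω = 0}).toReal = 2 * q - q ^ 2 := by
    have h := measure_union_add_inter (μ := P) {ω | Q ω = 0} hT
    have e1 : (P ({ω | Q ω = 0} ∪ {ω | R ω = 0})).toReal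
        + (P ({ω | Q ω = 0} ∩ {ω | R ω = 0})).toReal
        = (P {ω | Q ω = 0}).toReal + (P {ω | R ω = 0}).toReal := by
      rw [← ENNReal.toReal_add (measure_ne_top _ _) (measure_ne_top _ _),
        ← ENNReal.toReal_add (measure_ne_top _ _) (measure_ne_top _ _), h]
    have e2 : (P ({ω | Q ω = 0} ∩ {ω | R ω = 0})).toReal = q * q := by
      rw [hInter, ENNReal.toReal_mul, hRq, ← hq]
    have e3 : (P {ω | R ω = 0}).toReal = q := by rw [hRq, ← hq]
    rw [hset]
    nlinarith [e1, e2, e3]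
  rw [← hq] at tQ
  rw [hBq] at tQR
  have lim1 : Tendsto (fun k : ℕ => 2 * ((k : ℝ)⁻¹ *
      ∫ ω, (∑ j ∈ Finset.range k, (1 - Q ω) ^ j) ∂P)) atTop (nhds (2 * q)) :=
    tQ.const_mul 2
  have lim2 : Tendsto (fun k : ℕ => α * ((k : ℝ)⁻¹ *
      ∫ ω, (∑ j ∈ Finset.range k, (1 - Q ω * R ω) ^ j) ∂P)) atTop
      (nhds (α * (2 * q - q ^ 2))) := tQR.const_mul α
  have hev : (fun k : ℕ => α * ((k : ℝ)⁻¹ *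
      ∫ ω, (∑ j ∈ Finset.range k, (1 - Q ω * R ω) ^ j) ∂P)) ≤ᶠ[atTop]
      (fun k : ℕ => 2 * ((k : ℝ)⁻¹ *
      ∫ ω, (∑ j ∈ Finset.range k, (1 - Q ω) ^ j) ∂P)) := by
    filter_upwards [eventually_ge_atTop 1] with k hk
    have h := hineq k hk
    have hkpos : (0:ℝ) ≤ (k : ℝ)⁻¹ := by positivity
    have h2 : (k:ℝ)⁻¹ * (α * ∫ ω, (∑ j ∈ Finset.range k, (1 - Q ω * R ω) ^ j) ∂P)
        ≤ (k:ℝ)⁻¹ * (2 * ∫ ω, (∑ j ∈ Finset.range k, (1 - Q ω) ^ j) ∂P) :=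
      mul_le_mul_of_nonneg_left h hkpos
    calc α * ((k:ℝ)⁻¹ * ∫ ω, (∑ j ∈ Finset.range k, (1 - Q ω * R ω) ^ j) ∂P)
        = (k:ℝ)⁻¹ * (α * ∫ ω, (∑ j ∈ Finset.range k, (1 - Q ω * R ω) ^ j) ∂P) := by ring
      _ ≤ (k:ℝ)⁻¹ * (2 * ∫ ω, (∑ j ∈ Finset.range k, (1 - Q ω) ^ j) ∂P) := h2
      _ = 2 * ((k:ℝ)⁻¹ * ∫ ω, (∑ j ∈ Finset.range k, (1 - Q ω) ^ j) ∂P) := by ring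
  have main : α * (2 * q - q ^ 2) ≤ 2 * q := le_of_tendsto_of_tendsto lim2 lim1 hev
  refine ⟨main, fun hqpos => ?_⟩
  have hq1 : q ≤ 1 := by
    rw [hq]
    exact ENNReal.toReal_le_of_le_ofReal zero_le_one (by simpa using prob_le_one)
  rw [le_div_iff₀ (by linarith : (0:ℝ) < 2 - q)]
  nlinarith [main, hqpos]
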